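/- Every finite automaton is clopen-regular: for any finite automaton (X,f) over nonempty finite sets (A,Q,B), the language L(f,α) is regular for every finite cover α of X by clopen sets. -/

import Mathlib

open Set Function Topology

/-- The ω-limit set of a set `A` under `f`: `ω(A) = ⋂ₙ closure (⋃_{m>n} f^m(A))`. -/
def omegaSet {X : Type*} [TopologicalSpace X] (f : X → X) (A : Set X) : Set X :=
  ⋂ n : ℕ, closure (⋃ m : ℕ, ⋃ _ : n < m, f^[m] '' A)

/-- A dynamical system is chaotic if its periodic points are dense and it is
topologically transitive. -/
def IsChaotic {X : Type*} [TopologicalSpace X] (f : X → X) : Prop :=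
  Dense {x : X | ∃ n : ℕ, 0 < n ∧ f^[n] x = x} ∧
  ∀ U V : Set X, IsOpen U → IsOpen V → U.Nonempty → V.Nonempty →
    ∃ k : ℕ, 0 < k ∧ (f^[k] '' U ∩ V).Nonempty

/-- `f` restricted to the invariant set `S` is a chaotic dynamical system. -/
def ChaoticOn {X : Type*} [TopologicalSpace X] (f : X → X) (S : Set X) : Prop :=
  ∃ h : MapsTo f S S, IsChaotic (MapsTo.restrict f S S h)

/-- A system has chaotic limits if every point belongs to a set whose ω-limit set is
a chaotic system. -/
def HasChaoticLimits {X : Type*} [TopologicalSpace X] (f : X → X) : Prop :=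
  ∀ x : X, ∃ A : Set X, x ∈ A ∧ ChaoticOn f (omegaSet f A)
/-- The discontinuum over `A, Q, B`: two-sided sequences with letters from `A` at
positive coordinates, a letter from `Q` at coordinate `0`, and letters from `B` at
negative coordinates. -/
def Discontinuum (A Q B : Type*) : Type _ :=
  {u : ℤ → A ⊕ Q ⊕ B //
    (∀ i : ℤ, 0 < i → ∃ a : A, u i = Sum.inl a) ∧
    (∃ q : Q, u 0 = Sum.inr (Sum.inl q)) ∧
    (∀ i : ℤ, i < 0 → ∃ b : B, u i = Sum.inr (Sum.inr b))}

/-- The topology of the discontinuum: the product topology of the discrete topologies,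
i.e. the topology of the metric ρ(u,v) = 2^{-inf{i ≥ 0 : uᵢ ≠ vᵢ or u₋ᵢ ≠ v₋ᵢ}}. -/
instance (A Q B : Type*) : TopologicalSpace (Discontinuum A Q B) := by
  letI : TopologicalSpace (A ⊕ Q ⊕ B) := ⊥
  unfold Discontinuum
  infer_instance

/-- The inner state of the automaton, i.e. the coordinate `u 0`. -/
noncomputable def Discontinuum.state {A Q B : Type*} (u : Discontinuum A Q B) : Q :=
  u.2.2.1.choose

/-- The next input symbol, i.e. the coordinate `u 1`. -/
noncomputable def Discontinuum.input {A Q B : Type*} (u : Discontinuum A Q B) : A :=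
  (u.2.1 1 one_pos).choose

/-- The dynamical system of a finite automaton with input function `fA` and output
function `fB`: it reads a symbol from the input tape, changes its state, and writes
a symbol to the output tape. -/
noncomputable def autMap {A Q B : Type*} (fA : Q × A → Q) (fB : Q → B)
    (u : Discontinuum A Q B) : Discontinuum A Q B :=
  ⟨fun i =>
    if i = -1 then Sum.inr (Sum.inr (fB u.state))
    else if i = 0 then Sum.inr (Sum.inl (fA (u.state, u.input)))
    else u.1 (i + 1), by
      refine ⟨fun i hi => ?_, ?_, fun i hi => ?_⟩
      · beta_reduce
        rw [if_neg (by omega), if_neg (by omega)]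
        exact u.2.1 (i + 1) (by omega)
      · exact ⟨fA (u.state, u.input), by beta_reduce; rw [if_neg (by norm_num), if_pos rfl]⟩
      · by_cases h : i = -1
        · exact ⟨fB u.state, by beta_reduce; rw [if_pos h]⟩
        · beta_reduce
          rw [if_neg h, if_neg (by omega)]
          exact u.2.2.2 (i + 1) (by omega)⟩

/-- A dynamical system `g` is a factor of a finite automaton if there are nonempty
finite sets `A, Q, B`, input and output functions `fA, fB`, and a continuous
surjection `φ` from the corresponding finite automaton onto `(Y, g)` with
`g ∘ φ = φ ∘ f`. -/
def IsFactorOfFiniteAutomaton {Y : Type*} [TopologicalSpace Y] (g : Y → Y) : Prop :=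
  ∃ (A Q B : Type) (_ : Fintype A) (_ : Fintype Q) (_ : Fintype B)
    (_ : Nonempty A) (_ : Nonempty Q) (_ : Nonempty B)
    (fA : Q × A → Q) (fB : Q → B) (φ : Discontinuum A Q B → Y),
    Continuous φ ∧ Surjective φ ∧ g ∘ φ = φ ∘ autMap fA fB
/-- The language generated by a family `α` of subsets of `X`: all finite words
`u ∈ α*` such that some `x ∈ X` has itinerary `u`, i.e. `f^i(x) ∈ uᵢ` for `i < |u|`. -/
def genLanguage {X : Type*} (f : X → X) (α : Set (Set X)) : Language ↥α :=
  {w : List ↥α | ∃ x : X, ∀ i : Fin w.length, f^[(i : ℕ)] x ∈ (w.get i : Set X)}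

/-- A dynamical system is clopen-regular if the language generated by every finite
clopen cover is regular. -/
def ClopenRegular {X : Type*} [TopologicalSpace X] (f : X → X) : Prop :=
  ∀ α : Set (Set X), α.Finite → (∀ S ∈ α, IsClopen S) → ⋃₀ α = Set.univ →
    (genLanguage f α).IsRegular


-- topology lemmas
section Topo
variable {A Q B : Type*}

/-- cylinder -/
def dcyl (N : ℕ) (u : Discontinuum A Q B) : Set (Discontinuum A Q B) :=
  {v | ∀ j : ℤ, -(N:ℤ) ≤ j → j ≤ N → v.1 j = u.1 j}

lemma isOpen_dcyl (N : ℕ) (u : Discontinuum A Q B) : IsOpen (dcyl N u) := by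
  letI : TopologicalSpace (A ⊕ Q ⊕ B) := ⊥
  have : dcyl N u = ⋂ j ∈ Finset.Icc (-(N:ℤ)) N,
      (fun v : Discontinuum A Q B => v.1 j) ⁻¹' {u.1 j} := by
    ext v
    simp [dcyl, Finset.mem_Icc]
  rw [this]
  refine isOpen_biInter_finset fun j _ => ?_
  exact (continuous_apply j).comp continuous_subtype_val |>.isOpen_preimage _ trivial

lemma exists_dcyl_subset {U : Set (Discontinuum A Q B)} (hU : IsOpen U)
    {u : Discontinuum A Q B} (hu : u ∈ U) : ∃ N : ℕ, dcyl N u ⊆ U := by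
  letI : TopologicalSpace (A ⊕ Q ⊕ B) := ⊥
  replace hU := (isOpen_induced_iff (f := (Subtype.val : Discontinuum A Q B → (ℤ → A ⊕ Q ⊕ B)))).mp hU
  obtain ⟨V, hV, rfl⟩ := hU
  rw [isOpen_pi_iff] at hV
  obtain ⟨I, t, ht, hsub⟩ := hV u.1 hu
  refine ⟨I.sup fun i => i.natAbs, fun v hv => ?_⟩
  apply hsub
  intro i hi
  have h1 : i.natAbs ≤ I.sup fun i => i.natAbs := Finset.le_sup hi
  rw [hv i (by omega) (by omega)]
  exact (ht i hi).2
end Topo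

section Compact
variable {A Q B : Type*} [Finite A] [Finite Q] [Finite B]

lemma discontinuum_compactSpace : CompactSpace (Discontinuum A Q B) := by
  letI : TopologicalSpace (A ⊕ Q ⊕ B) := ⊥
  haveI : DiscreteTopology (A ⊕ Q ⊕ B) := ⟨rfl⟩
  refine isCompact_iff_compactSpace.mp (IsClosed.isCompact (s := {u : ℤ → A ⊕ Q ⊕ B |
    (∀ i : ℤ, 0 < i → ∃ a : A, u i = Sum.inl a) ∧
    (∃ q : Q, u 0 = Sum.inr (Sum.inl q)) ∧
    (∀ i : ℤ, i < 0 → ∃ b : B, u i = Sum.inr (Sum.inr b))}) ?_)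
  have : {u : ℤ → A ⊕ Q ⊕ B |
    (∀ i : ℤ, 0 < i → ∃ a : A, u i = Sum.inl a) ∧
    (∃ q : Q, u 0 = Sum.inr (Sum.inl q)) ∧
    (∀ i : ℤ, i < 0 → ∃ b : B, u i = Sum.inr (Sum.inr b))} =
      ⋂ i : ℤ, (fun u : ℤ → A ⊕ Q ⊕ B => u i) ⁻¹'
        (if 0 < i then {s | ∃ a : A, s = Sum.inl a}
         else if i = 0 then {s | ∃ q : Q, s = Sum.inr (Sum.inl q)}
         else {s | ∃ b : B, s = Sum.inr (Sum.inr b)}) := by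
    ext u
    simp only [Set.mem_setOf_eq, Set.mem_iInter, Set.mem_preimage]
    constructor
    · rintro ⟨h1, h2, h3⟩ i
      split_ifs with hi hi0
      · exact h1 i hi
      · exact hi0 ▸ h2
      · exact h3 i (by omega)
    · intro h
      refine ⟨fun i hi => by simpa [hi] using h i, by simpa using h 0,
        fun i hi => by have := h i; simp [hi, not_lt.mpr hi.le, hi.ne] at this; exact this⟩
  rw [this]
  exact isClosed_iInter fun i => (isClosed_discrete _).preimage (continuous_apply i)
end Compact

section Det
variable {A Q B : Type*} [Finite A] [Finite Q] [Finite B]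

lemma clopen_determined {S : Set (Discontinuum A Q B)} (hS : IsClopen S) :
    ∃ N : ℕ, ∀ u v : Discontinuum A Q B,
      (∀ j : ℤ, -(N:ℤ) ≤ j → j ≤ N → u.1 j = v.1 j) → (u ∈ S ↔ v ∈ S) := by
  haveI := discontinuum_compactSpace (A := A) (Q := Q) (B := B)
  have key : ∀ u : Discontinuum A Q B, ∃ n : ℕ,
      ∀ v ∈ dcyl n u, (v ∈ S ↔ u ∈ S) := by
    intro u
    by_cases hu : u ∈ S
    · obtain ⟨n, hn⟩ := exists_dcyl_subset hS.2 hu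
      exact ⟨n, fun v hv => by simp [hn hv, hu]⟩
    · obtain ⟨n, hn⟩ := exists_dcyl_subset hS.1.isOpen_compl hu
      exact ⟨n, fun v hv => by simp [hu]; exact hn hv⟩
  choose n hn using key
  obtain ⟨t, ht⟩ := IsCompact.elim_finite_subcover isCompact_univ
    (fun u : Discontinuum A Q B => dcyl (n u) u) (fun u => isOpen_dcyl _ _)
    (fun u _ => Set.mem_iUnion.mpr ⟨u, fun j _ _ => rfl⟩)
  refine ⟨t.sup n, fun u v hagree => ?_⟩
  obtain ⟨w, hw, hu⟩ := Set.mem_iUnion₂.mp (ht (Set.mem_univ u))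
  have hnw : n w ≤ t.sup n := Finset.le_sup hw
  have hv : v ∈ dcyl (n w) w := by
    intro j h1 h2
    rw [← hagree j (by omega) (by omega)]
    exact hu j h1 h2
  rw [hn w u hu, hn w v hv]
end Det

section Dyn
variable {A Q B : Type*} (fA : Q × A → Q) (fB : Q → B)

lemma Discontinuum.state_spec (u : Discontinuum A Q B) :
    u.1 0 = Sum.inr (Sum.inl u.state) := u.2.2.1.choose_spec

lemma Discontinuum.state_eq {u : Discontinuum A Q B} {q : Q}
    (h : u.1 0 = Sum.inr (Sum.inl q)) : u.state = q := by
  have := u.state_spec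
  rw [h] at this
  exact (Sum.inl.inj (Sum.inr.inj this)).symm

lemma Discontinuum.input_spec (u : Discontinuum A Q B) :
    u.1 1 = Sum.inl u.input := (u.2.1 1 one_pos).choose_spec

lemma Discontinuum.input_eq {u : Discontinuum A Q B} {a : A}
    (h : u.1 1 = Sum.inl a) : u.input = a := by
  have := u.input_spec
  rw [h] at this
  exact (Sum.inl.inj this).symm

lemma autMap_apply_ne {u : Discontinuum A Q B} {j : ℤ} (h1 : j ≠ -1) (h0 : j ≠ 0) :
    (autMap fA fB u).1 j = u.1 (j + 1) := by
  simp only [autMap, if_neg h1, if_neg h0]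

lemma autMap_apply_zero (u : Discontinuum A Q B) :
    (autMap fA fB u).1 0 = Sum.inr (Sum.inl (fA (u.state, u.input))) := by
  simp only [autMap]
  norm_num

lemma autMap_apply_neg_one (u : Discontinuum A Q B) :
    (autMap fA fB u).1 (-1) = Sum.inr (Sum.inr (fB u.state)) := by
  simp only [autMap]
  norm_num

lemma iterate_apply_pos (u : Discontinuum A Q B) (i : ℕ) {j : ℤ} (hj : 1 ≤ j) :
    ((autMap fA fB)^[i] u).1 j = u.1 (j + i) := by
  induction i generalizing u with
  | zero => simp
  | succ i ih =>
    rw [Function.iterate_succ_apply]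
    rw [ih (autMap fA fB u), autMap_apply_ne fA fB (by omega) (by omega)]
    congr 1
    push_cast
    ring

lemma step_agree {u v : Discontinuum A Q B} {K : ℤ} (hK : 1 ≤ K)
    (h : ∀ j : ℤ, j ≤ K → u.1 j = v.1 j) :
    ∀ j : ℤ, j ≤ K - 1 → (autMap fA fB u).1 j = (autMap fA fB v).1 j := by
  have hst : u.state = v.state := by
    have h0 := h 0 (by omega)
    rw [u.state_spec, v.state_spec] at h0
    exact Sum.inl.inj (Sum.inr.inj h0)
  have hin : u.input = v.input := by
    have h1 := h 1 hK
    rw [u.input_spec, v.input_spec] at h1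
    exact Sum.inl.inj h1
  intro j hj
  rcases eq_or_ne j (-1) with rfl | h1
  · rw [autMap_apply_neg_one, autMap_apply_neg_one, hst]
  rcases eq_or_ne j 0 with rfl | h0
  · rw [autMap_apply_zero, autMap_apply_zero, hst, hin]
  rw [autMap_apply_ne fA fB h1 h0, autMap_apply_ne fA fB h1 h0]
  exact h (j + 1) (by omega)

lemma iterate_agree {u v : Discontinuum A Q B} (i : ℕ) {K : ℤ} (hK : (i : ℤ) + 1 ≤ K)
    (h : ∀ j : ℤ, j ≤ K → u.1 j = v.1 j) :
    ∀ j : ℤ, j ≤ K - i → ((autMap fA fB)^[i] u).1 j = ((autMap fA fB)^[i] v).1 j := by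
  induction i generalizing u v K with
  | zero => simpa using h
  | succ i ih =>
    intro j hj
    rw [Function.iterate_succ_apply, Function.iterate_succ_apply]
    refine ih (K := K - 1) (by omega) (step_agree fA fB (by omega) h) j (by omega)
end Dyn

section Window
variable {A Q B : Type*} [Nonempty A] [Nonempty Q] (fA : Q × A → Q) (fB : Q → B) (N : ℕ)

/-- finite window configurations -/
abbrev Conf (A Q B : Type*) (N : ℕ) : Type _ :=
  ↥(Finset.Icc (-(N : ℤ) - 1) ((N : ℤ) + 1)) → A ⊕ Q ⊕ B

/-- the window of a point -/
def Wnd (u : Discontinuum A Q B) : Conf A Q B N := fun j => u.1 j.1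

noncomputable def getQ : A ⊕ Q ⊕ B → Q
  | Sum.inr (Sum.inl q) => q
  | _ => Classical.arbitrary Q

noncomputable def getA : A ⊕ Q ⊕ B → A
  | Sum.inl a => a
  | _ => Classical.arbitrary A

noncomputable def cst (c : Conf A Q B N) : Q :=
  getQ (c ⟨0, Finset.mem_Icc.mpr (by omega)⟩)

noncomputable def cin (c : Conf A Q B N) : A :=
  getA (c ⟨1, Finset.mem_Icc.mpr (by omega)⟩)

omit [Nonempty A] in
lemma cst_Wnd (u : Discontinuum A Q B) : cst N (Wnd N u) = u.state := by
  unfold cst Wnd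
  rw [u.state_spec]
  rfl

omit [Nonempty Q] in
lemma cin_Wnd (u : Discontinuum A Q B) : cin N (Wnd N u) = u.input := by
  unfold cin Wnd
  rw [u.input_spec]
  rfl

noncomputable def nextW (c : Conf A Q B N) (a : A) : Conf A Q B N := fun j =>
  if h : j.1 = (N : ℤ) + 1 then Sum.inl a
  else if j.1 = -1 then Sum.inr (Sum.inr (fB (cst N c)))
  else if j.1 = 0 then Sum.inr (Sum.inl (fA (cst N c, cin N c)))
  else c ⟨j.1 + 1, Finset.mem_Icc.mpr (by
    have := Finset.mem_Icc.mp j.2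
    omega)⟩

lemma Wnd_autMap {u : Discontinuum A Q B} {a : A} (ha : u.1 ((N : ℤ) + 2) = Sum.inl a) :
    Wnd N (autMap fA fB u) = nextW fA fB N (Wnd N u) a := by
  funext j
  obtain ⟨j, hj⟩ := j
  have hj' := Finset.mem_Icc.mp hj
  show (autMap fA fB u).1 j = nextW fA fB N (Wnd N u) a ⟨j, hj⟩
  unfold nextW
  rcases eq_or_ne j ((N : ℤ) + 1) with rfl | hN
  · rw [dif_pos rfl, autMap_apply_ne fA fB (by omega) (by omega),
      show (N : ℤ) + 1 + 1 = (N : ℤ) + 2 by ring]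
    exact ha
  rcases eq_or_ne j (-1) with rfl | h1
  · rw [dif_neg hN, if_pos rfl, autMap_apply_neg_one, cst_Wnd]
  rcases eq_or_ne j 0 with rfl | h0
  · rw [dif_neg hN, if_neg (show (0:ℤ) ≠ -1 by decide), if_pos rfl, autMap_apply_zero, cst_Wnd, cin_Wnd]
  rw [dif_neg hN, if_neg h1, if_neg h0, autMap_apply_ne fA fB h1 h0]
  rfl
end Window

section Mod
variable {A Q B : Type*}

/-- modify one input coordinate -/
def modIn (x : Discontinuum A Q B) (k : ℤ) (hk : 1 ≤ k) (a : A) :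
    Discontinuum A Q B :=
  ⟨fun j => if j = k then Sum.inl a else x.1 j, by
    refine ⟨fun i hi => ?_, ?_, fun i hi => ?_⟩
    · by_cases h : i = k
      · exact ⟨a, by simp [h]⟩
      · simpa [h] using x.2.1 i hi
    · obtain ⟨q, hq⟩ := x.2.2.1
      exact ⟨q, by beta_reduce; rw [if_neg (show (0:ℤ) ≠ k by omega)]; exact hq⟩
    · beta_reduce
      rw [if_neg (show i ≠ k by omega)]
      exact x.2.2.2 i hi⟩

lemma modIn_apply_ne (x : Discontinuum A Q B) (k : ℤ) (hk : 1 ≤ k) (a : A)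
    {j : ℤ} (h : j ≠ k) : (modIn x k hk a).1 j = x.1 j := by
  simp [modIn, h]

lemma modIn_apply_eq (x : Discontinuum A Q B) (k : ℤ) (hk : 1 ≤ k) (a : A) :
    (modIn x k hk a).1 k = Sum.inl a := by
  simp [modIn]
end Mod

/-- Any finite automaton is clopen-regular. -/
theorem finiteAutomaton_clopenRegular (A Q B : Type)
    [Fintype A] [Fintype Q] [Fintype B] [Nonempty A] [Nonempty Q] [Nonempty B]
    (fA : Q × A → Q) (fB : Q → B) :
    ClopenRegular (autMap fA fB) := by
  classical
  intro α hfin hclopen _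
  haveI : Fintype ↥α := hfin.fintype
  -- determinacy radius
  have hdetS : ∀ S : ↥α, ∃ n : ℕ, ∀ u v : Discontinuum A Q B,
      (∀ j : ℤ, -(n : ℤ) ≤ j → j ≤ n → u.1 j = v.1 j) →
      (u ∈ (S : Set (Discontinuum A Q B)) ↔ v ∈ (S : Set (Discontinuum A Q B))) :=
    fun S => clopen_determined (hclopen S S.2)
  choose Nd hNd using hdetS
  set N := Finset.univ.sup Nd with hNdef
  have hdet : ∀ S : ↥α, ∀ u v : Discontinuum A Q B,
      (∀ j : ℤ, -(N : ℤ) - 1 ≤ j → j ≤ (N : ℤ) + 1 → u.1 j = v.1 j) →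
      (u ∈ (S : Set (Discontinuum A Q B)) ↔ v ∈ (S : Set (Discontinuum A Q B))) := by
    intro S u v h
    have hle : Nd S ≤ N := Finset.le_sup (Finset.mem_univ S)
    exact hNd S u v fun j h1 h2 => h j (by omega) (by omega)
  have hWagree : ∀ u v : Discontinuum A Q B, Wnd N u = Wnd N v →
      ∀ j : ℤ, -(N : ℤ) - 1 ≤ j → j ≤ (N : ℤ) + 1 → u.1 j = v.1 j :=
    fun u v h j h1 h2 => congrFun h ⟨j, Finset.mem_Icc.mpr ⟨h1, h2⟩⟩
  -- the NFA
  let M : NFA ↥α (Conf A Q B N) :=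
    ⟨fun c S => {c' | (∀ u : Discontinuum A Q B, Wnd N u = c → u ∈ (S : Set (Discontinuum A Q B))) ∧
        ∃ a : A, c' = nextW fA fB N c a},
     Set.range (Wnd N), Set.univ⟩
  have main : ∀ w : List ↥α, M.eval w =
      {c | ∃ x : Discontinuum A Q B, c = Wnd N ((autMap fA fB)^[w.length] x) ∧
        ∀ i : Fin w.length, (autMap fA fB)^[(i : ℕ)] x ∈ (w.get i : Set (Discontinuum A Q B))} := by
    intro w
    induction w using List.reverseRecOn with
    | nil =>
      ext c
      show c ∈ Set.range (Wnd N) ↔ _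
      simp [eq_comm]
    | append_singleton w S ih =>
      rw [NFA.eval_append_singleton, ih]
      ext c'
      rw [NFA.mem_stepSet]
      simp only [Set.mem_setOf_eq]
      set n := w.length with hn
      constructor
      · rintro ⟨c, ⟨x, rfl, hx⟩, hGood, a, rfl⟩
        set x' := modIn x ((n : ℤ) + N + 2) (by omega) a with hx'
        have hagree : ∀ j : ℤ, j ≤ (n : ℤ) + N + 1 → x'.1 j = x.1 j :=
          fun j hj => modIn_apply_ne x _ _ a (by omega)
        have hit : ∀ i : ℕ, i ≤ n → ∀ j : ℤ, j ≤ (N : ℤ) + 1 →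
            ((autMap fA fB)^[i] x').1 j = ((autMap fA fB)^[i] x).1 j := by
          intro i hi j hj
          exact iterate_agree fA fB i (K := (n : ℤ) + N + 1) (by omega) hagree j (by omega)
        have hW : ∀ i : ℕ, i ≤ n → Wnd N ((autMap fA fB)^[i] x') = Wnd N ((autMap fA fB)^[i] x) := by
          intro i hi
          funext j
          exact hit i hi j.1 (Finset.mem_Icc.mp j.2).2
        refine ⟨x', ?_, ?_⟩
        · rw [List.length_append, List.length_singleton, Function.iterate_succ_apply']
          rw [Wnd_autMap fA fB N (a := a) ?_, hW n le_rfl]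
          rw [iterate_apply_pos fA fB x' (j := (N : ℤ) + 2) n (by omega)]
          rw [show (N : ℤ) + 2 + n = (n : ℤ) + N + 2 by ring]
          exact modIn_apply_eq x _ _ a
        · intro i
          rcases lt_or_ge (i : ℕ) n with hi | hi
          · have hget : ((w ++ [S]).get i : Set (Discontinuum A Q B)) = (w.get ⟨i, hi⟩ : Set (Discontinuum A Q B)) := by
              congr 1
              rw [List.get_eq_getElem, List.get_eq_getElem, List.getElem_append_left]
            rw [hget]
            exact (hdet _ _ _ (hWagree _ _ (hW i (le_of_lt hi)))).mpr (hx ⟨i, hi⟩)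
          · have hieq : (i : ℕ) = n := by have := i.2; simp at this; omega
            have hget : ((w ++ [S]).get i : Set (Discontinuum A Q B)) = (S : Set (Discontinuum A Q B)) := by
              congr 1
              rw [List.get_eq_getElem]
              simp [hieq, hn]
            rw [hget, hieq]
            exact hGood ((autMap fA fB)^[n] x') (hW n le_rfl)
      · rintro ⟨x, rfl, hx⟩
        obtain ⟨a, ha⟩ := x.2.1 ((n : ℤ) + N + 2) (by omega)
        refine ⟨Wnd N ((autMap fA fB)^[n] x), ⟨x, rfl, fun i => ?_⟩, ?_, a, ?_⟩
        · have hget : ((w ++ [S]).get ⟨i, by simp⟩ : Set (Discontinuum A Q B)) = (w.get i : Set (Discontinuum A Q B)) := by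
            congr 1
            rw [List.get_eq_getElem, List.get_eq_getElem, List.getElem_append_left]
          rw [← hget]
          exact hx ⟨i, by simp⟩
        · intro u hu
          have hmem : (autMap fA fB)^[n] x ∈ (S : Set (Discontinuum A Q B)) := by
            have := hx ⟨n, by simp [hn]⟩
            have hget : ((w ++ [S]).get ⟨n, by simp [hn]⟩ : Set (Discontinuum A Q B)) = (S : Set (Discontinuum A Q B)) := by
              congr 1
              rw [List.get_eq_getElem]
              simp [hn]
            rwa [hget] at this
          exact (hdet _ _ _ (hWagree _ _ hu)).mpr hmem
        · rw [List.length_append, List.length_singleton, Function.iterate_succ_apply']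
          rw [Wnd_autMap fA fB N (a := a) ?_]
          rw [iterate_apply_pos fA fB x (j := (N : ℤ) + 2) n (by omega)]
          rw [show (N : ℤ) + 2 + n = (n : ℤ) + N + 2 by ring]
          exact ha
  refine ⟨Set (Conf A Q B N), inferInstance, M.toDFA, ?_⟩
  rw [NFA.toDFA_correct]
  ext w
  constructor
  · rintro ⟨c, -, hc⟩
    rw [main w] at hc
    obtain ⟨x, -, hx⟩ := hc
    exact ⟨x, hx⟩
  · rintro ⟨x, hx⟩
    have hmem : Wnd N ((autMap fA fB)^[w.length] x) ∈ M.eval w := by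
      rw [main w]
      exact ⟨x, rfl, hx⟩
    exact ⟨_, Set.mem_univ _, hmem⟩
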